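/- Let q be a prime power and let r ≥ 3 and k ≥ 3 be integers. If either q is odd and r ≤ q, or q is even and r ≤ q + 1, then α_q(k,r) = r·q^{k−2} − C(r,2)·q^{k−3}, where C(r,2) is the binomial coefficient r choose 2. -/

import Mathlib

open scoped Classical
open Matrix

/-- The support of a word. -/
def wordSupp {F : Type} [Field F] {n : ℕ} (c : Fin n → F) : Set (Fin n) :=
  {i | c i ≠ 0}

/-- A nonzero codeword of `C` is minimal if no nonzero codeword of `C` has support
properly contained in its support. -/
def IsMinimalCodeword {F : Type} [Field F] {n : ℕ}
    (C : Submodule F (Fin n → F)) (c : Fin n → F) : Prop :=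
  c ∈ C ∧ c ≠ 0 ∧ ∀ c' ∈ C, c' ≠ 0 → ¬ wordSupp c' ⊂ wordSupp c

/-- The number of minimal codewords of `C`, counted up to equivalence (i.e. up to
multiplication by a nonzero scalar). -/
noncomputable def numMinimal {F : Type} [Field F] {n : ℕ}
    (C : Submodule F (Fin n → F)) : ℕ :=
  Nat.card (Quot (fun c c' : {c : Fin n → F // IsMinimalCodeword C c} =>
    ∃ a : Fˣ, a • c.1 = c'.1))

/-- A code is projective if no coordinate vanishes identically and no two distinct
coordinates agree up to a nonzero scalar factor on all of `C`. -/
def IsProjective {F : Type} [Field F] {n : ℕ} (C : Submodule F (Fin n → F)) : Prop :=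
  (∀ i : Fin n, ∃ c ∈ C, c i ≠ 0) ∧
  ∀ i j : Fin n, i ≠ j → ¬ ∃ a : F, a ≠ 0 ∧ ∀ c ∈ C, c j = a * c i

/-- `mMin F n k` : the minimum of `numMinimal C` over all projective `[n,k]` codes over `F`. -/
noncomputable def mMin (F : Type) [Field F] [Fintype F] (n k : ℕ) : ℕ :=
  sInf {m | ∃ C : Submodule F (Fin n → F),
    Module.finrank F C = k ∧ IsProjective C ∧ numMinimal C = m}

/-- `alphaQ F k r` : minimum cardinality of a set `S` of points (1-dimensional subspaces)
of `F^k` for which there are `r` distinct hyperplanes `H i` and codimension-2 subspaces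
`U i ≤ H i` such that every point lying on some `H i` but not on `U i` belongs to `S`. -/
noncomputable def alphaQ (F : Type) [Field F] [Fintype F] (k r : ℕ) : ℕ :=
  sInf {m | ∃ S : Set (Submodule F (Fin k → F)), S.ncard = m ∧
    ∃ H U : Fin r → Submodule F (Fin k → F),
      Function.Injective H ∧
      (∀ i, Module.finrank F (H i) = k - 1) ∧
      (∀ i, Module.finrank F (U i) = k - 2) ∧
      (∀ i, U i ≤ H i) ∧
      ∀ P : Submodule F (Fin k → F), Module.finrank F P = 1 →
        (∃ i, P ≤ H i ∧ ¬ P ≤ U i) → P ∈ S}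

/-- The minimum Hamming weight of a code. -/
noncomputable def minDist {F : Type} [Field F] {n : ℕ} (C : Submodule F (Fin n → F)) : ℕ :=
  sInf {w | ∃ c ∈ C, c ≠ 0 ∧ (wordSupp c).ncard = w}

/-- The support of a subcode. -/
def subcodeSupp {F : Type} [Field F] {n : ℕ} (D : Submodule F (Fin n → F)) : Set (Fin n) :=
  {i | ∃ v ∈ D, v i ≠ 0}

/-- An `l`-dimensional subcode `D` of `C` is support-minimal if no `l`-dimensional subcode
of `C` has support properly contained in `supp D`. -/
def IsSupportMinimal {F : Type} [Field F] {n : ℕ}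
    (C D : Submodule F (Fin n → F)) (l : ℕ) : Prop :=
  D ≤ C ∧ Module.finrank F D = l ∧
  ∀ D' : Submodule F (Fin n → F), D' ≤ C → Module.finrank F D' = l →
    ¬ subcodeSupp D' ⊂ subcodeSupp D

/-- The `l`-th generalized Hamming weight of `C`. -/
noncomputable def genWeight {F : Type} [Field F] {n : ℕ}
    (C : Submodule F (Fin n → F)) (l : ℕ) : ℕ :=
  sInf {w | ∃ D : Submodule F (Fin n → F), D ≤ C ∧ Module.finrank F D = l ∧
    (subcodeSupp D).ncard = w}

/-- The number of support-minimal `l`-dimensional subcodes of `C`. -/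
noncomputable def numSupportMinimal {F : Type} [Field F] {n : ℕ}
    (C : Submodule F (Fin n → F)) (l : ℕ) : ℕ :=
  Nat.card {D : Submodule F (Fin n → F) // IsSupportMinimal C D l}

/-- The Gaussian binomial coefficient `[k choose l]_q`. -/
def gaussBinom (q k l : ℕ) : ℕ :=
  (∏ i ∈ Finset.range l, (q ^ (k - i) - 1)) / (∏ i ∈ Finset.range l, (q ^ (i + 1) - 1))

/-- `alphaL F k l r` : the analogue of `alphaQ` for codimension `l`. -/
noncomputable def alphaL (F : Type) [Field F] [Fintype F] (k l r : ℕ) : ℕ :=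
  sInf {m | ∃ S : Set (Submodule F (Fin k → F)), S.ncard = m ∧
    ∃ W U : Fin r → Submodule F (Fin k → F),
      Function.Injective W ∧
      (∀ i, Module.finrank F (W i) = k - l) ∧
      (∀ i, Module.finrank F (U i) = k - (l + 1)) ∧
      (∀ i, U i ≤ W i) ∧
      ∀ P : Submodule F (Fin k → F), Module.finrank F P = 1 →
        (∃ i, P ≤ W i ∧ ¬ P ≤ U i) → P ∈ S}

set_option linter.unusedSectionVars false
set_option linter.unusedVariables false
set_option maxHeartbeats 1000000

section IE
variable {β : Type} [Finite β]

lemma ncard_biUnion_le (n : ℕ) (B : ℕ → Set β) :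
    (⋃ i ∈ Finset.range n, B i).ncard ≤ ∑ i ∈ Finset.range n, (B i).ncard := by
  induction n with
  | zero => simp
  | succ n ih =>
      rw [Finset.range_add_one]
      simp only [Finset.mem_insert, Set.iUnion_iUnion_eq_or_left]
      calc (B n ∪ ⋃ i ∈ Finset.range n, B i).ncard
          ≤ (B n).ncard + (⋃ i ∈ Finset.range n, B i).ncard :=
            Set.ncard_union_le _ _
        _ ≤ (B n).ncard + ∑ i ∈ Finset.range n, (B i).ncard := by omega
        _ = ∑ i ∈ insert n (Finset.range n), (B i).ncard := by
            rw [Finset.sum_insert (by simp)]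

lemma ncard_biUnion_eq (n : ℕ) (B : ℕ → Set β)
    (hd : ∀ i j, i < n → j < n → i ≠ j → B i ∩ B j = ∅) :
    (⋃ i ∈ Finset.range n, B i).ncard = ∑ i ∈ Finset.range n, (B i).ncard := by
  induction n with
  | zero => simp
  | succ n ih =>
      rw [Finset.range_add_one]
      simp only [Finset.mem_insert, Set.iUnion_iUnion_eq_or_left]
      rw [Set.ncard_union_eq ?_ (Set.toFinite _) (Set.toFinite _),
        Finset.sum_insert (by simp), ih (fun i j hi hj hij => hd i j (by omega) (by omega) hij)]
      · rw [Set.disjoint_iff_inter_eq_empty, Set.inter_iUnion₂, Set.eq_empty_iff_forall_notMem]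
        intro x hx
        simp only [Set.mem_iUnion, Finset.mem_range] at hx
        obtain ⟨i, hi, hx⟩ := hx
        have := hd n i (by omega) (by omega) (by omega)
        rw [Set.eq_empty_iff_forall_notMem] at this
        exact this x hx

lemma bonferroni (n : ℕ) (A : ℕ → Set β) :
    ∑ i ∈ Finset.range n, (A i).ncard ≤
      (⋃ i ∈ Finset.range n, A i).ncard
        + ∑ j ∈ Finset.range n, ∑ i ∈ Finset.range j, (A i ∩ A j).ncard := by
  induction n with
  | zero => simp
  | succ n ih =>
      rw [Finset.range_add_one, Finset.sum_insert (by simp), Finset.sum_insert (by simp)]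
      simp only [Finset.mem_insert, Set.iUnion_iUnion_eq_or_left]
      have key := Set.ncard_union_add_ncard_inter (⋃ i ∈ Finset.range n, A i) (A n)
        (Set.toFinite _) (Set.toFinite _)
      have hsub : ((⋃ i ∈ Finset.range n, A i) ∩ A n).ncard
          ≤ ∑ i ∈ Finset.range n, (A i ∩ A n).ncard := by
        rw [Set.iUnion₂_inter]
        exact ncard_biUnion_le n _
      have hcomm : (A n ∪ ⋃ i ∈ Finset.range n, A i).ncard
          = ((⋃ i ∈ Finset.range n, A i) ∪ A n).ncard := by rw [Set.union_comm]
      omega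

lemma ie_exact (n : ℕ) (A : ℕ → Set β)
    (ht : ∀ i j l, i < n → j < n → l < n → i ≠ j → j ≠ l → i ≠ l → A i ∩ A j ∩ A l = ∅) :
    ∑ i ∈ Finset.range n, (A i).ncard =
      (⋃ i ∈ Finset.range n, A i).ncard
        + ∑ j ∈ Finset.range n, ∑ i ∈ Finset.range j, (A i ∩ A j).ncard := by
  induction n with
  | zero => simp
  | succ n ih =>
      rw [Finset.range_add_one, Finset.sum_insert (by simp), Finset.sum_insert (by simp)]
      simp only [Finset.mem_insert, Set.iUnion_iUnion_eq_or_left]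
      have key := Set.ncard_union_add_ncard_inter (⋃ i ∈ Finset.range n, A i) (A n)
        (Set.toFinite _) (Set.toFinite _)
      have hsub : ((⋃ i ∈ Finset.range n, A i) ∩ A n).ncard
          = ∑ i ∈ Finset.range n, (A i ∩ A n).ncard := by
        rw [Set.iUnion₂_inter]
        refine ncard_biUnion_eq n _ (fun i j hi hj hij => ?_)
        have := ht i j n (by omega) (by omega) (by omega) hij (by omega) (by omega)
        rw [Set.eq_empty_iff_forall_notMem] at this ⊢
        intro x hx
        exact this x ⟨⟨hx.1.1, hx.2.1⟩, hx.1.2⟩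
      have hcomm : (A n ∪ ⋃ i ∈ Finset.range n, A i).ncard
          = ((⋃ i ∈ Finset.range n, A i) ∪ A n).ncard := by rw [Set.union_comm]
      have ihh := ih (fun i j l hi hj hl => ht i j l (by omega) (by omega) (by omega))
      omega
end IE


section Gen
variable {F : Type} [Field F] [Fintype F] {k : ℕ}

noncomputable instance : Fintype (Fin k → F) := inferInstance

lemma finsub : Finite (Submodule F (Fin k → F)) :=
  Finite.of_injective (fun W : Submodule F (Fin k → F) => (W : Set (Fin k → F)))
    (fun _ _ h => SetLike.ext' h)

lemma ncard_submodule (W : Submodule F (Fin k → F)) :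
    (W : Set (Fin k → F)).ncard = Fintype.card F ^ Module.finrank F W := by
  rw [← Nat.card_coe_set_eq, Nat.card_eq_fintype_card]
  exact Module.card_eq_pow_finrank

lemma ncard_diff_submodule {W D : Submodule F (Fin k → F)} (h : D ≤ W) :
    ((W : Set (Fin k → F)) \ D).ncard
      = Fintype.card F ^ Module.finrank F W - Fintype.card F ^ Module.finrank F D := by
  rw [Set.ncard_diff h (Set.toFinite _), ncard_submodule, ncard_submodule]

end Gen
lemma ncard_finset_biUnion {α β : Type} [Finite β] (s : Finset α) (g : α → Set β)
    (hd : (s : Set α).Pairwise (Function.onFun Disjoint g)) :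
    (⋃ a ∈ s, g a).ncard = ∑ a ∈ s, (g a).ncard := by
  induction s using Finset.induction_on with
  | empty => simp
  | @insert a s ha ih =>
      simp only [Finset.mem_insert, Set.iUnion_iUnion_eq_or_left]
      rw [Finset.sum_insert ha, Set.ncard_union_eq ?_ (Set.toFinite _) (Set.toFinite _),
        ih (hd.mono (fun x hx => by
          simp only [Finset.coe_insert, Set.mem_insert_iff]
          exact Or.inr hx))]
      · refine Set.disjoint_iUnion₂_right.mpr (fun b hb => ?_)
        exact hd (by simp) (by simp [Finset.mem_coe.mp hb]) (by rintro rfl; exact ha hb)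

section Fib
variable {F : Type} [Field F] [Fintype F] {k : ℕ}

lemma span_eq_of_mem_onedim {P : Submodule F (Fin k → F)} (h1 : Module.finrank F P = 1)
    {v : Fin k → F} (hv : v ∈ P) (hv0 : v ≠ 0) : Submodule.span F {v} = P := by
  apply Submodule.eq_of_le_of_finrank_eq ((Submodule.span_le).mpr (by simpa using hv))
  rw [finrank_span_singleton hv0, h1]

/-- fibration: vectors over points -/
lemma ncard_point_fib (T : Set (Submodule F (Fin k → F)))
    (hT : ∀ P ∈ T, Module.finrank F P = 1) :
    (⋃ P ∈ T, ((P : Set (Fin k → F)) \ {0})).ncard = (Fintype.card F - 1) * T.ncard := by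
  haveI := finsub (F := F) (k := k)
  have hfin : T.Finite := Set.toFinite T
  have h1 : (⋃ P ∈ T, ((P : Set (Fin k → F)) \ {0}))
      = ⋃ P ∈ hfin.toFinset, ((P : Set (Fin k → F)) \ {0}) := by
    ext x
    simp only [Set.mem_iUnion, Set.Finite.mem_toFinset]
  have hd : (hfin.toFinset : Set (Submodule F (Fin k → F))).Pairwise
      (Function.onFun Disjoint fun P : Submodule F (Fin k → F) => ((P : Set (Fin k → F)) \ {0})) := by
    intro P hP Q hQ hne
    rw [Set.Finite.coe_toFinset] at hP hQ
    simp only [Function.onFun, Set.disjoint_iff_inter_eq_empty, Set.eq_empty_iff_forall_notMem]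
    rintro x ⟨⟨hxP, hx0⟩, ⟨hxQ, _⟩⟩
    rw [Set.mem_singleton_iff] at hx0
    exact hne ((span_eq_of_mem_onedim (hT P hP) hxP hx0).symm.trans
      (span_eq_of_mem_onedim (hT Q hQ) hxQ hx0))
  rw [h1, ncard_finset_biUnion _ _ hd]
  have hsum : ∑ P ∈ hfin.toFinset, ((P : Set (Fin k → F)) \ {0}).ncard
      = ∑ _P ∈ hfin.toFinset, (Fintype.card F - 1) := by
    refine Finset.sum_congr rfl (fun P hP => ?_)
    rw [Set.Finite.mem_toFinset] at hP
    have h0 : ((P : Set (Fin k → F)) \ {0})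
        = (P : Set (Fin k → F)) \ ((⊥ : Submodule F (Fin k → F)) : Set (Fin k → F)) := by simp
    rw [h0, ncard_diff_submodule bot_le, finrank_bot, hT P hP]
    simp
  rw [hsum, Finset.sum_const, smul_eq_mul, ← Set.ncard_eq_toFinset_card _ hfin, mul_comm]
end Fib
section Comap
variable {F : Type} [Field F]

lemma finrank_comap_surj {M N : Type} [AddCommGroup M] [Module F M] [AddCommGroup N]
    [Module F N] [FiniteDimensional F M] (π : M →ₗ[F] N) (hπ : Function.Surjective π)
    (W : Submodule F N) :
    Module.finrank F (W.comap π) =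
      Module.finrank F W + Module.finrank F (LinearMap.ker π) := by
  set ρ : ↥(W.comap π) →ₗ[F] ↥W :=
    LinearMap.codRestrict W (π.domRestrict (W.comap π)) (fun x => x.2) with hρ
  have hrange : LinearMap.range ρ = ⊤ := by
    rw [LinearMap.range_eq_top]
    rintro ⟨w, hw⟩
    obtain ⟨x, hx⟩ := hπ w
    exact ⟨⟨x, by simpa [Submodule.mem_comap, hx] using hw⟩, Subtype.ext hx⟩
  have hker : LinearMap.ker ρ = Submodule.comap (W.comap π).subtype (LinearMap.ker π) := by
    ext x
    simp only [LinearMap.mem_ker, Submodule.mem_comap, Submodule.subtype_apply]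
    exact ⟨fun h => congrArg Subtype.val h, fun h => Subtype.ext h⟩
  have hle : LinearMap.ker π ≤ W.comap π := fun x hx => by
    simp [Submodule.mem_comap, LinearMap.mem_ker.mp hx]
  have h1 := LinearMap.finrank_range_add_finrank_ker ρ
  rw [hrange, finrank_top, hker,
    LinearEquiv.finrank_eq (Submodule.comapSubtypeEquivOfLe hle)] at h1
  exact h1.symm

/-- the linear form given by dot product with w -/
noncomputable def dotL {n : ℕ} (w : Fin n → F) : (Fin n → F) →ₗ[F] F :=
  ∑ m, w m • (LinearMap.proj m : ((Fin n → F) →ₗ[F] F))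

lemma dotL_apply {n : ℕ} (w x : Fin n → F) : dotL w x = ∑ m, w m * x m := by
  simp [dotL]

lemma finrank_ker_dotL {n : ℕ} (w : Fin n → F) (h : ∃ x, dotL w x ≠ 0) :
    Module.finrank F (LinearMap.ker (dotL w)) = n - 1 := by
  obtain ⟨x₀, hx₀⟩ := h
  have hsurj : Function.Surjective (dotL w) := by
    intro a
    refine ⟨(a * (dotL w x₀)⁻¹) • x₀, ?_⟩
    rw [_root_.map_smul, smul_eq_mul, mul_assoc, inv_mul_cancel₀ hx₀, mul_one]
  have h1 := LinearMap.finrank_range_add_finrank_ker (dotL w)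
  rw [LinearMap.range_eq_top.mpr hsurj, finrank_top, Module.finrank_self,
    Module.finrank_fin_fun] at h1
  omega

/-- projection to first 3 coordinates -/
noncomputable def proj3 {k : ℕ} (h : 3 ≤ k) : (Fin k → F) →ₗ[F] (Fin 3 → F) :=
  LinearMap.funLeft F F (Fin.castLE h)

lemma proj3_surj {k : ℕ} (h : 3 ≤ k) : Function.Surjective (proj3 (F := F) h) :=
  LinearMap.funLeft_surjective_of_injective F F _ (Fin.castLE_injective h)

lemma finrank_ker_proj3 {k : ℕ} (h : 3 ≤ k) :
    Module.finrank F (LinearMap.ker (proj3 (F := F) h)) = k - 3 := by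
  have h1 := LinearMap.finrank_range_add_finrank_ker (proj3 (F := F) h)
  rw [LinearMap.range_eq_top.mpr (proj3_surj h), finrank_top, Module.finrank_fin_fun,
    Module.finrank_fin_fun] at h1
  omega

/-- a section of proj3 -/
noncomputable def lift3 {k : ℕ} (h : 3 ≤ k) (w : Fin 3 → F) : Fin k → F :=
  fun m => if hm : (m : ℕ) < 3 then w ⟨m, hm⟩ else 0

lemma proj3_lift3 {k : ℕ} (h : 3 ≤ k) (w : Fin 3 → F) : proj3 h (lift3 h w) = w := by
  funext m
  simp only [proj3, LinearMap.funLeft_apply, lift3, Fin.coe_castLE, Fin.is_lt, dite_true]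

end Comap
lemma mymulsub (m q : ℕ) : m * q - m = m * (q - 1) := by
  rw [← Nat.pred_eq_sub_one, Nat.mul_pred]

lemma arith_lower {q a X r C : ℕ} (hq : 2 ≤ q)
    (h : r * (a * q * q - a * q) ≤ (q - 1) * X + C * (a * q - a)) :
    r * (a * q) - C * a ≤ X := by
  rw [mymulsub (a*q) q, mymulsub a q] at h
  have h2 : r * (a * q) * (q - 1) ≤ (X + C * a) * (q - 1) := by
    calc r * (a * q) * (q - 1) = r * (a * q * (q - 1)) := by ring
    _ ≤ (q - 1) * X + C * (a * (q-1)) := h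
    _ = (X + C * a) * (q - 1) := by ring
  have h3 : r * (a * q) ≤ X + C * a :=
    Nat.le_of_mul_le_mul_right h2 (by omega)
  omega

section Lower
variable {F : Type} [Field F] [Fintype F]

lemma lower_bound {k r : ℕ} (hk : 3 ≤ k)
    (H U : Fin r → Submodule F (Fin k → F))
    (hinj : Function.Injective H)
    (hH : ∀ i, Module.finrank F (H i) = k - 1)
    (hU : ∀ i, Module.finrank F (U i) = k - 2)
    (hUH : ∀ i, U i ≤ H i)
    (S : Set (Submodule F (Fin k → F)))
    (hS : ∀ P : Submodule F (Fin k → F), Module.finrank F P = 1 → (∃ i, P ≤ H i ∧ ¬ P ≤ U i) → P ∈ S) :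
    r * Fintype.card F ^ (k - 2) - r.choose 2 * Fintype.card F ^ (k - 3) ≤ S.ncard := by
  haveI := finsub (F := F) (k := k)
  set q := Fintype.card F with hqdef
  have hq2 : 2 ≤ q := Fintype.one_lt_card
  set A : ℕ → Set (Fin k → F) :=
    fun i => if h : i < r then ((H ⟨i, h⟩ : Set (Fin k → F)) \ (U ⟨i, h⟩ : Set (Fin k → F)))
      else ∅ with hA
  set T : Set (Submodule F (Fin k → F)) :=
    {P | Module.finrank F P = 1 ∧ ∃ i, P ≤ H i ∧ ¬ P ≤ U i} with hT
  have hTS : T.ncard ≤ S.ncard :=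
    Set.ncard_le_ncard (fun P hP => hS P hP.1 hP.2) (Set.toFinite S)
  -- the union of the A i is the union of points of T
  have hUnion : (⋃ i ∈ Finset.range r, A i) = ⋃ P ∈ T, ((P : Set (Fin k → F)) \ {0}) := by
    ext v
    simp only [Set.mem_iUnion, Finset.mem_range]
    constructor
    · rintro ⟨i, hi, hv⟩
      rw [hA] at hv
      simp only [hi, dite_true] at hv
      obtain ⟨hvH, hvU⟩ := hv
      have hv0 : v ≠ 0 := fun h => hvU (h ▸ (U ⟨i, hi⟩).zero_mem)
      refine ⟨Submodule.span F {v}, ⟨finrank_span_singleton hv0, ⟨⟨i, hi⟩,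
        Submodule.span_le.mpr (Set.singleton_subset_iff.mpr hvH),
        fun hle => hvU (hle (Submodule.mem_span_singleton_self v))⟩⟩, ?_⟩
      exact ⟨Submodule.mem_span_singleton_self v, fun h => hv0 h⟩
    · rintro ⟨P, ⟨hP1, ⟨i, hPH, hPU⟩⟩, hvP, hv0⟩
      rw [Set.mem_singleton_iff] at hv0
      refine ⟨i, i.isLt, ?_⟩
      rw [hA]
      simp only [i.isLt, dite_true, Fin.eta]
      refine ⟨hPH hvP, fun hvU => hPU ?_⟩
      rw [← span_eq_of_mem_onedim hP1 hvP hv0]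
      exact Submodule.span_le.mpr (Set.singleton_subset_iff.mpr hvU)
  have hfib : (⋃ i ∈ Finset.range r, A i).ncard = (q - 1) * T.ncard := by
    rw [hUnion]
    exact ncard_point_fib T (fun P hP => hP.1)
  -- cardinalities
  have hAcard : ∀ i ∈ Finset.range r, (A i).ncard = q ^ (k-1) - q ^ (k-2) := by
    intro i hi
    rw [Finset.mem_range] at hi
    rw [hA]
    simp only [hi, dite_true]
    rw [ncard_diff_submodule (hUH ⟨i, hi⟩), hH, hU]
  -- pairwise intersections
  have hAint : ∀ j ∈ Finset.range r, ∀ i ∈ Finset.range j,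
      (A i ∩ A j).ncard ≤ q ^ (k-2) - q ^ (k-3) := by
    intro j hj i hi
    rw [Finset.mem_range] at hj hi
    have hir : i < r := lt_trans hi hj
    set i' : Fin r := ⟨i, hir⟩
    set j' : Fin r := ⟨j, hj⟩
    have hij : i' ≠ j' := by
      intro h
      exact absurd (congrArg Fin.val h) (by simp [i', j']; omega)
    have hsub : A i ∩ A j ⊆
        ((H i' ⊓ H j' : Submodule F (Fin k → F)) : Set (Fin k → F))
          \ ((U i' ⊓ H j' : Submodule F (Fin k → F)) : Set (Fin k → F)) := by
      rintro x ⟨hxi, hxj⟩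
      rw [hA] at hxi hxj
      simp only [hir, hj, dite_true] at hxi hxj
      refine ⟨Submodule.mem_inf.mpr ⟨hxi.1, hxj.1⟩, fun hx => hxi.2 (Submodule.mem_inf.mp hx).1⟩
    have hle : (U i' ⊓ H j' : Submodule F (Fin k → F)) ≤ H i' ⊓ H j' :=
      inf_le_inf_right _ (hUH i')
    have hcard := ncard_diff_submodule (F := F) hle
    -- finrank bounds
    have ha1 : Module.finrank F ↥(H i' ⊓ H j') ≤ k - 1 := by
      rw [← hH i']; exact Submodule.finrank_mono inf_le_left
    have ha2 : Module.finrank F ↥(H i' ⊓ H j') ≠ k - 1 := by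
      intro h
      have e1 : H i' ⊓ H j' = H i' :=
        Submodule.eq_of_le_of_finrank_le inf_le_left (by rw [hH i', h])
      have e2 : H i' ⊓ H j' = H j' :=
        Submodule.eq_of_le_of_finrank_le inf_le_right (by rw [hH j', h])
      exact hij (hinj (e1.symm.trans e2))
    have ha : Module.finrank F ↥(H i' ⊓ H j') ≤ k - 2 := by omega
    have hb : k - 3 ≤ Module.finrank F ↥(U i' ⊓ H j') := by
      have h1 := Submodule.finrank_sup_add_finrank_inf_eq (U i') (H j')
      have h2 : Module.finrank F ↥(U i' ⊔ H j') ≤ k := by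
        have := Submodule.finrank_le (U i' ⊔ H j')
        rwa [Module.finrank_fin_fun] at this
      rw [hU i', hH j'] at h1
      omega
    calc (A i ∩ A j).ncard
        ≤ _ := Set.ncard_le_ncard hsub (Set.toFinite _)
      _ = q ^ Module.finrank F ↥(H i' ⊓ H j') - q ^ Module.finrank F ↥(U i' ⊓ H j') := hcard
      _ ≤ q ^ (k-2) - q ^ (k-3) :=
          tsub_le_tsub (Nat.pow_le_pow_right (by omega) ha) (Nat.pow_le_pow_right (by omega) hb)
  -- Bonferroni
  have hbon := bonferroni r A
  rw [Finset.sum_congr rfl hAcard, Finset.sum_const, Finset.card_range, smul_eq_mul, hfib] at hbon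
  have hpairs : ∑ j ∈ Finset.range r, ∑ i ∈ Finset.range j, (A i ∩ A j).ncard
      ≤ r.choose 2 * (q ^ (k-2) - q ^ (k-3)) := by
    calc ∑ j ∈ Finset.range r, ∑ i ∈ Finset.range j, (A i ∩ A j).ncard
        ≤ ∑ j ∈ Finset.range r, ∑ _i ∈ Finset.range j, (q ^ (k-2) - q ^ (k-3)) := by
          refine Finset.sum_le_sum (fun j hj => Finset.sum_le_sum (fun i hi => hAint j hj i hi))
      _ = (∑ j ∈ Finset.range r, j) * (q ^ (k-2) - q ^ (k-3)) := by
          rw [Finset.sum_mul]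
          exact Finset.sum_congr rfl (fun j _ => by
            rw [Finset.sum_const, smul_eq_mul, Finset.card_range])
      _ = r.choose 2 * (q ^ (k-2) - q ^ (k-3)) := by
          rw [Finset.sum_range_id, Nat.choose_two_right]
  -- assemble
  have hkey : r * (q ^ (k-1) - q ^ (k-2)) ≤ (q - 1) * T.ncard
      + r.choose 2 * (q ^ (k-2) - q ^ (k-3)) := by omega
  have e1 : q ^ (k-2) = q ^ (k-3) * q := by
    rw [← pow_succ]; congr 1; omega
  have e2 : q ^ (k-1) = q ^ (k-3) * q * q := by
    rw [← pow_succ, ← pow_succ]; congr 1; omega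
  rw [e1, e2] at hkey
  have := arith_lower (a := q ^ (k-3)) hq2 hkey
  rw [e1]
  omega
end Lower
section Conic
variable {F : Type} [Field F]

def fvo : Option F → (Fin 3 → F)
  | some t => ![1, t, t ^ 2]
  | none => ![0, 0, 1]

def uvo : Option F → (Fin 3 → F)
  | some t => ![t ^ 2, -(2 * t), 1]
  | none => ![1, 0, 0]

def pvo : Option F → Option F → (Fin 3 → F)
  | some t, some s => ![t * s, -(t + s), 1]
  | some t, none => ![t, -1, 0]
  | none, some s => ![s, -1, 0]
  | none, none => 0

lemma dot3 (w x : Fin 3 → F) : dotL w x = w 0 * x 0 + w 1 * x 1 + w 2 * x 2 := by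
  rw [dotL_apply, Fin.sum_univ_three]

lemma L1 (o : Option F) : dotL (fvo o) (uvo o) = 0 := by
  cases o with
  | none => simp [dot3, fvo, uvo]
  | some t => simp [dot3, fvo, uvo]; ring

lemma L2 {o o' : Option F} (h : o ≠ o') : dotL (fvo o) (uvo o') ≠ 0 := by
  cases o with
  | none => cases o' with
    | none => exact absurd rfl h
    | some s => simp [dot3, fvo, uvo]
  | some t => cases o' with
    | none => simp [dot3, fvo, uvo]
    | some s =>
        have hts : t ≠ s := fun hh => h (by rw [hh])
        simp only [dot3, fvo, uvo, Matrix.cons_val_zero, Matrix.cons_val_one,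
          Matrix.head_cons, Matrix.cons_val_two, Matrix.tail_cons]
        have e : (1 : F) * s ^ 2 + t * -(2 * s) + t ^ 2 * 1 = (t - s) ^ 2 := by ring
        rw [e]
        exact pow_ne_zero 2 (sub_ne_zero.mpr hts)

lemma L6 (o : Option F) : uvo o ≠ 0 := by
  cases o with
  | none => intro h; simpa [uvo] using congrFun h 0
  | some t => intro h; simpa [uvo] using congrFun h 2

lemma L7 {o o' : Option F} (h : o ≠ o') : pvo o o' ≠ 0 := by
  cases o with
  | none => cases o' with
    | none => exact absurd rfl h
    | some s => intro hh; simpa [pvo] using congrFun hh 1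
  | some t => cases o' with
    | none => intro hh; simpa [pvo] using congrFun hh 1
    | some s => intro hh; simpa [pvo] using congrFun hh 2

lemma L3 {o o' : Option F} (h : o ≠ o') :
    dotL (fvo o) (pvo o o') = 0 ∧ dotL (fvo o') (pvo o o') = 0 := by
  cases o with
  | none => cases o' with
    | none => exact absurd rfl h
    | some s => constructor <;> (simp [dot3, fvo, pvo]; try ring)
  | some t => cases o' with
    | none => constructor <;> (simp [dot3, fvo, pvo]; try ring)
    | some s => constructor <;> (simp [dot3, fvo, pvo]; try ring)

lemma L4 {o o' : Option F} (h : o ≠ o') (x : Fin 3 → F)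
    (h1 : dotL (fvo o) x = 0) (h2 : dotL (fvo o') x = 0) :
    ∃ c : F, x = c • pvo o o' := by
  cases o with
  | none => cases o' with
    | none => exact absurd rfl h
    | some s =>
        simp only [dot3, fvo, Matrix.cons_val_zero, Matrix.cons_val_one, Matrix.head_cons,
          Matrix.cons_val_two, Matrix.tail_cons, zero_mul, one_mul, zero_add, mul_one] at h1 h2
        refine ⟨-x 1, funext fun m => ?_⟩
        fin_cases m
        · show x 0 = (-x 1 • pvo none (some s)) 0
          simp only [pvo, Pi.smul_apply, smul_eq_mul, Matrix.cons_val_zero]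
          linear_combination h2 - s ^ 2 * h1
        · show x 1 = (-x 1 • pvo none (some s)) 1
          simp only [pvo, Pi.smul_apply, smul_eq_mul, Matrix.cons_val_one, Matrix.head_cons,
            Matrix.cons_val_zero]
          ring
        · show x 2 = (-x 1 • pvo none (some s)) 2
          simp only [pvo, Pi.smul_apply, smul_eq_mul, Matrix.cons_val_two, Matrix.tail_cons,
            Matrix.head_cons]
          linear_combination h1
  | some t => cases o' with
    | none =>
        simp only [dot3, fvo, Matrix.cons_val_zero, Matrix.cons_val_one, Matrix.head_cons,
          Matrix.cons_val_two, Matrix.tail_cons, zero_mul, one_mul, zero_add, mul_one] at h1 h2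
        refine ⟨-x 1, funext fun m => ?_⟩
        fin_cases m
        · show x 0 = (-x 1 • pvo (some t) none) 0
          simp only [pvo, Pi.smul_apply, smul_eq_mul, Matrix.cons_val_zero]
          linear_combination h1 - t ^ 2 * h2
        · show x 1 = (-x 1 • pvo (some t) none) 1
          simp only [pvo, Pi.smul_apply, smul_eq_mul, Matrix.cons_val_one, Matrix.head_cons,
            Matrix.cons_val_zero]
          ring
        · show x 2 = (-x 1 • pvo (some t) none) 2
          simp only [pvo, Pi.smul_apply, smul_eq_mul, Matrix.cons_val_two, Matrix.tail_cons,
            Matrix.head_cons]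
          linear_combination h2
    | some s =>
        have hts : t ≠ s := fun hh => h (by rw [hh])
        simp only [dot3, fvo, Matrix.cons_val_zero, Matrix.cons_val_one, Matrix.head_cons,
          Matrix.cons_val_two, Matrix.tail_cons, zero_mul, one_mul, zero_add, mul_one] at h1 h2
        have h3 : (t - s) * (x 1 + (t + s) * x 2) = 0 := by linear_combination h1 - h2
        have h4 : x 1 + (t + s) * x 2 = 0 := by
          rcases mul_eq_zero.mp h3 with h5 | h5
          · exact absurd h5 (sub_ne_zero.mpr hts)
          · exact h5
        refine ⟨x 2, funext fun m => ?_⟩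
        fin_cases m
        · show x 0 = (x 2 • pvo (some t) (some s)) 0
          simp only [pvo, Pi.smul_apply, smul_eq_mul, Matrix.cons_val_zero]
          linear_combination h1 - t * h4
        · show x 1 = (x 2 • pvo (some t) (some s)) 1
          simp only [pvo, Pi.smul_apply, smul_eq_mul, Matrix.cons_val_one, Matrix.head_cons,
            Matrix.cons_val_zero]
          linear_combination h4
        · show x 2 = (x 2 • pvo (some t) (some s)) 2
          simp only [pvo, Pi.smul_apply, smul_eq_mul, Matrix.cons_val_two, Matrix.tail_cons,
            Matrix.head_cons]
          ring

lemma L5 {o o' o'' : Option F} (h1 : o ≠ o') (h2 : o ≠ o'') (h3 : o' ≠ o'') :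
    dotL (fvo o'') (pvo o o') ≠ 0 := by
  cases o'' with
  | some a =>
      cases o with
      | some t => cases o' with
        | some s =>
            have hat : a ≠ t := fun hh => h2 (by rw [hh])
            have has : a ≠ s := fun hh => h3 (by rw [hh])
            simp only [dot3, fvo, pvo, Matrix.cons_val_zero, Matrix.cons_val_one,
              Matrix.head_cons, Matrix.cons_val_two, Matrix.tail_cons]
            have e : (1 : F) * (t * s) + a * -(t + s) + a ^ 2 * 1 = (a - t) * (a - s) := by ring
            rw [e]
            exact mul_ne_zero (sub_ne_zero.mpr hat) (sub_ne_zero.mpr has)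
        | none =>
            have hat : a ≠ t := fun hh => h2 (by rw [hh])
            simp only [dot3, fvo, pvo, Matrix.cons_val_zero, Matrix.cons_val_one,
              Matrix.head_cons, Matrix.cons_val_two, Matrix.tail_cons]
            have e : (1 : F) * t + a * -1 + a ^ 2 * 0 = t - a := by ring
            rw [e]
            exact sub_ne_zero.mpr (fun hh => hat hh.symm)
      | none => cases o' with
        | some s =>
            have has : a ≠ s := fun hh => h3 (by rw [hh])
            simp only [dot3, fvo, pvo, Matrix.cons_val_zero, Matrix.cons_val_one,
              Matrix.head_cons, Matrix.cons_val_two, Matrix.tail_cons]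
            have e : (1 : F) * s + a * -1 + a ^ 2 * 0 = s - a := by ring
            rw [e]
            exact sub_ne_zero.mpr (fun hh => has hh.symm)
        | none => exact absurd rfl h1
  | none =>
      cases o with
      | some t => cases o' with
        | some s => simp [dot3, fvo, pvo]
        | none => exact absurd rfl h3
      | none => exact absurd rfl h2

end Conic

lemma arith_upper {q a X r C : ℕ} (hq : 2 ≤ q)
    (h : r * (a * q * q - a * q) = (q - 1) * X + C * (a * q - a)) :
    X = r * (a * q) - C * a := by
  rw [mymulsub (a * q) q, mymulsub a q] at h
  have h2 : r * (a * q) * (q - 1) = (X + C * a) * (q - 1) := by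
    calc r * (a * q) * (q - 1) = r * (a * q * (q - 1)) := by ring
    _ = (q - 1) * X + C * (a * (q - 1)) := h
    _ = (X + C * a) * (q - 1) := by ring
  have h3 : r * (a * q) = X + C * a := Nat.eq_of_mul_eq_mul_right (by omega) h2
  omega

section Upper
variable {F : Type} [Field F] [Fintype F]

lemma unionA_eq {k r : ℕ} (H U : Fin r → Submodule F (Fin k → F)) :
    (⋃ i ∈ Finset.range r, (fun i => if h : i < r then
        ((H ⟨i, h⟩ : Set (Fin k → F)) \ (U ⟨i, h⟩ : Set (Fin k → F))) else ∅) i)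
      = ⋃ P ∈ {P : Submodule F (Fin k → F) |
          Module.finrank F P = 1 ∧ ∃ i, P ≤ H i ∧ ¬ P ≤ U i},
        ((P : Set (Fin k → F)) \ {0}) := by
  ext v
  simp only [Set.mem_iUnion, Finset.mem_range, Set.mem_setOf_eq]
  constructor
  · rintro ⟨i, hi, hv⟩
    simp only [hi, dite_true] at hv
    obtain ⟨hvH, hvU⟩ := hv
    have hv0 : v ≠ 0 := fun h => hvU (h ▸ (U ⟨i, hi⟩).zero_mem)
    refine ⟨Submodule.span F {v}, ⟨finrank_span_singleton hv0, ⟨⟨i, hi⟩,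
      Submodule.span_le.mpr (Set.singleton_subset_iff.mpr hvH),
      fun hle => hvU (hle (Submodule.mem_span_singleton_self v))⟩⟩, ?_⟩
    exact ⟨Submodule.mem_span_singleton_self v, fun h => hv0 h⟩
  · rintro ⟨P, ⟨hP1, ⟨i, hPH, hPU⟩⟩, hvP, hv0⟩
    rw [Set.mem_singleton_iff] at hv0
    refine ⟨i, i.isLt, ?_⟩
    simp only [i.isLt, dite_true, Fin.eta]
    refine ⟨hPH hvP, fun hvU => hPU ?_⟩
    rw [← span_eq_of_mem_onedim hP1 hvP hv0]
    exact Submodule.span_le.mpr (Set.singleton_subset_iff.mpr hvU)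

lemma upper_bound {k r : ℕ} (hk : 3 ≤ k) (hrq : r ≤ Fintype.card F + 1) :
    ∃ S : Set (Submodule F (Fin k → F)),
      S.ncard = r * Fintype.card F ^ (k - 2) - r.choose 2 * Fintype.card F ^ (k - 3) ∧
      ∃ H U : Fin r → Submodule F (Fin k → F),
        Function.Injective H ∧
        (∀ i, Module.finrank F (H i) = k - 1) ∧
        (∀ i, Module.finrank F (U i) = k - 2) ∧
        (∀ i, U i ≤ H i) ∧
        ∀ P : Submodule F (Fin k → F), Module.finrank F P = 1 →
          (∃ i, P ≤ H i ∧ ¬ P ≤ U i) → P ∈ S := by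
  haveI := finsub (F := F) (k := k)
  set q := Fintype.card F with hqdef
  have hq2 : 2 ≤ q := Fintype.one_lt_card
  obtain ⟨τ⟩ : Nonempty (Fin r ↪ Option F) := by
    apply Function.Embedding.nonempty_of_card_le
    rw [Fintype.card_fin, Fintype.card_option]
    omega
  set π : (Fin k → F) →ₗ[F] (Fin 3 → F) := proj3 hk with hπdef
  have hπs : Function.Surjective π := proj3_surj hk
  have hkerπ : Module.finrank F (LinearMap.ker π) = k - 3 := finrank_ker_proj3 hk
  have hex : ∀ o : Option F, ∃ x, dotL (fvo o) x ≠ 0 := by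
    intro o
    obtain ⟨o', ho'⟩ := exists_ne o
    exact ⟨uvo o', L2 (Ne.symm ho')⟩
  set H : Fin r → Submodule F (Fin k → F) :=
    fun i => (LinearMap.ker (dotL (fvo (τ i)))).comap π with hHdef
  set U : Fin r → Submodule F (Fin k → F) :=
    fun i => (Submodule.span F {uvo (τ i)}).comap π with hUdef
  have hmemH : ∀ (i : Fin r) (x : Fin k → F), x ∈ H i ↔ dotL (fvo (τ i)) (π x) = 0 := by
    intro i x
    simp [hHdef, Submodule.mem_comap, LinearMap.mem_ker]
  have hmemU : ∀ (i : Fin r) (x : Fin k → F), x ∈ U i ↔ ∃ c : F, π x = c • uvo (τ i) := by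
    intro i x
    simp only [hUdef, Submodule.mem_comap, Submodule.mem_span_singleton]
    exact ⟨fun ⟨a, ha⟩ => ⟨a, ha.symm⟩, fun ⟨a, ha⟩ => ⟨a, ha.symm⟩⟩
  have hHrank : ∀ i, Module.finrank F (H i) = k - 1 := by
    intro i
    rw [hHdef]
    rw [finrank_comap_surj π hπs, finrank_ker_dotL _ (hex _), hkerπ]
    omega
  have hUrank : ∀ i, Module.finrank F (U i) = k - 2 := by
    intro i
    rw [hUdef]
    rw [finrank_comap_surj π hπs, finrank_span_singleton (L6 _), hkerπ]
    omega
  have hUH : ∀ i, U i ≤ H i := by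
    intro i
    apply Submodule.comap_mono
    rw [Submodule.span_le, Set.singleton_subset_iff]
    exact LinearMap.mem_ker.mpr (L1 _)
  have hτne : ∀ {i j : Fin r}, i ≠ j → τ i ≠ τ j :=
    fun h hc => h (τ.injective hc)
  have hinj : Function.Injective H := by
    intro i j hij
    by_contra hne
    have hx : lift3 hk (uvo (τ i)) ∈ H i := by
      rw [hmemH, proj3_lift3]
      exact L1 _
    rw [hij, hmemH, proj3_lift3] at hx
    exact L2 (hτne (fun h => hne h.symm)) hx
  set A : ℕ → Set (Fin k → F) :=
    fun i => if h : i < r then ((H ⟨i, h⟩ : Set (Fin k → F)) \ (U ⟨i, h⟩ : Set (Fin k → F)))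
      else ∅ with hA
  set S : Set (Submodule F (Fin k → F)) :=
    {P | Module.finrank F P = 1 ∧ ∃ i, P ≤ H i ∧ ¬ P ≤ U i} with hS
  refine ⟨S, ?_, H, U, hinj, hHrank, hUrank, hUH, fun P h1 h2 => ⟨h1, h2⟩⟩
  -- counting
  have hAi : ∀ i (hi : i < r), A i = (H ⟨i, hi⟩ : Set (Fin k → F)) \ (U ⟨i, hi⟩) := by
    intro i hi
    rw [hA]
    simp [hi]
  have hAcard : ∀ i ∈ Finset.range r, (A i).ncard = q ^ (k - 1) - q ^ (k - 2) := by
    intro i hi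
    rw [Finset.mem_range] at hi
    rw [hAi i hi, ncard_diff_submodule (hUH ⟨i, hi⟩), hHrank, hUrank]
  -- pairwise intersections
  have hpair : ∀ i j (hi : i < r) (hj : j < r), i ≠ j →
      (A i ∩ A j).ncard = q ^ (k - 2) - q ^ (k - 3) := by
    intro i j hi hj hij
    set i' : Fin r := ⟨i, hi⟩
    set j' : Fin r := ⟨j, hj⟩
    have hij' : i' ≠ j' := fun h => hij (congrArg Fin.val h)
    have hτij : τ i' ≠ τ j' := hτne hij'
    set W : Submodule F (Fin k → F) := (Submodule.span F {pvo (τ i') (τ j')}).comap π with hW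
    have hkerle : LinearMap.ker π ≤ W := by
      intro x hx
      rw [LinearMap.mem_ker] at hx
      simp [hW, Submodule.mem_comap, hx]
    have heq : A i ∩ A j = (W : Set (Fin k → F)) \ (LinearMap.ker π : Set (Fin k → F)) := by
      ext x
      rw [hAi i hi, hAi j hj]
      simp only [Set.mem_inter_iff, Set.mem_diff, SetLike.mem_coe]
      constructor
      · rintro ⟨⟨hxi, hxiU⟩, ⟨hxj, hxjU⟩⟩
        rw [hmemH] at hxi hxj
        obtain ⟨c, hc⟩ := L4 hτij (π x) hxi hxj
        have hπx : π x ≠ 0 := by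
          intro h0
          exact hxiU ((hmemU i' x).mpr ⟨0, by rw [h0, zero_smul]⟩)
        refine ⟨?_, fun hker => hπx (LinearMap.mem_ker.mp hker)⟩
        rw [hW, Submodule.mem_comap, Submodule.mem_span_singleton]
        exact ⟨c, hc.symm⟩
      · rintro ⟨hxW, hxker⟩
        rw [hW, Submodule.mem_comap, Submodule.mem_span_singleton] at hxW
        obtain ⟨c, hc⟩ := hxW
        have hπx : π x ≠ 0 := fun h0 => hxker (LinearMap.mem_ker.mpr h0)
        have hc0 : c ≠ 0 := by
          intro h0
          rw [h0, zero_smul] at hc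
          exact hπx hc.symm
        have hxi : dotL (fvo (τ i')) (π x) = 0 := by
          rw [← hc, _root_.map_smul, smul_eq_mul, (L3 hτij).1, mul_zero]
        have hxj : dotL (fvo (τ j')) (π x) = 0 := by
          rw [← hc, _root_.map_smul, smul_eq_mul, (L3 hτij).2, mul_zero]
        refine ⟨⟨(hmemH i' x).mpr hxi, ?_⟩, (hmemH j' x).mpr hxj, ?_⟩
        · intro hxU
          obtain ⟨b, hb⟩ := (hmemU i' x).mp hxU
          rw [hb, _root_.map_smul, smul_eq_mul] at hxj
          rcases mul_eq_zero.mp hxj with h0 | h0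
          · rw [h0, zero_smul] at hb; exact hπx hb
          · exact L2 (Ne.symm hτij) h0
        · intro hxU
          obtain ⟨b, hb⟩ := (hmemU j' x).mp hxU
          rw [hb, _root_.map_smul, smul_eq_mul] at hxi
          rcases mul_eq_zero.mp hxi with h0 | h0
          · rw [h0, zero_smul] at hb; exact hπx hb
          · exact L2 hτij h0
    rw [heq, ncard_diff_submodule hkerle, hkerπ, hW,
      finrank_comap_surj π hπs, finrank_span_singleton (L7 hτij), hkerπ]
    congr 1
    congr 1
    omega
  -- triple intersections empty
  have htriple : ∀ i j l, i < r → j < r → l < r → i ≠ j → j ≠ l → i ≠ l →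
      A i ∩ A j ∩ A l = ∅ := by
    intro i j l hi hj hl hij hjl hil
    set i' : Fin r := ⟨i, hi⟩
    set j' : Fin r := ⟨j, hj⟩
    set l' : Fin r := ⟨l, hl⟩
    have hτij : τ i' ≠ τ j' := hτne (fun h => hij (congrArg Fin.val h))
    have hτil : τ i' ≠ τ l' := hτne (fun h => hil (congrArg Fin.val h))
    have hτjl : τ j' ≠ τ l' := hτne (fun h => hjl (congrArg Fin.val h))
    rw [Set.eq_empty_iff_forall_notMem]
    rintro x ⟨⟨hxi, hxj⟩, hxl⟩
    rw [hAi i hi] at hxi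
    rw [hAi j hj] at hxj
    rw [hAi l hl] at hxl
    obtain ⟨hxiH, hxiU⟩ := hxi
    obtain ⟨hxjH, _⟩ := hxj
    obtain ⟨hxlH, _⟩ := hxl
    rw [SetLike.mem_coe, hmemH] at hxiH hxjH hxlH
    obtain ⟨c, hc⟩ := L4 hτij (π x) hxiH hxjH
    rw [hc, _root_.map_smul, smul_eq_mul] at hxlH
    rcases mul_eq_zero.mp hxlH with h0 | h0
    · rw [h0, zero_smul] at hc
      exact hxiU ((hmemU i' x).mpr ⟨0, by rw [hc, zero_smul]⟩)
    · exact L5 hτij hτil hτjl h0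
  -- exact inclusion–exclusion
  have hie := ie_exact r A htriple
  rw [Finset.sum_congr rfl hAcard, Finset.sum_const, Finset.card_range, smul_eq_mul] at hie
  have hpairsum : ∑ j ∈ Finset.range r, ∑ i ∈ Finset.range j, (A i ∩ A j).ncard
      = r.choose 2 * (q ^ (k - 2) - q ^ (k - 3)) := by
    calc ∑ j ∈ Finset.range r, ∑ i ∈ Finset.range j, (A i ∩ A j).ncard
        = ∑ j ∈ Finset.range r, ∑ _i ∈ Finset.range j, (q ^ (k - 2) - q ^ (k - 3)) := by
          refine Finset.sum_congr rfl (fun j hj => Finset.sum_congr rfl (fun i hi => ?_))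
          rw [Finset.mem_range] at hj hi
          exact hpair i j (by omega) hj (by omega)
      _ = r.choose 2 * (q ^ (k - 2) - q ^ (k - 3)) := by
          rw [Finset.sum_congr rfl (fun j _ => by
            rw [Finset.sum_const, smul_eq_mul, Finset.card_range]), ← Finset.sum_mul,
            Finset.sum_range_id, Nat.choose_two_right]
  rw [hpairsum] at hie
  -- the union counts points of S
  have hfib : (⋃ i ∈ Finset.range r, A i).ncard = (q - 1) * S.ncard := by
    rw [hA, unionA_eq H U]
    exact ncard_point_fib _ (fun P hP => hP.1)
  rw [hfib] at hie
  -- arithmetic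
  have e1 : q ^ (k - 2) = q ^ (k - 3) * q := by
    rw [← pow_succ]; congr 1; omega
  have e2 : q ^ (k - 1) = q ^ (k - 3) * q * q := by
    rw [← pow_succ, ← pow_succ]; congr 1; omega
  rw [e1, e2] at hie
  rw [e1]
  exact arith_upper hq2 hie
end Upper


/-- for a prime power `q` and integers `r ≥ 3`, `k ≥ 3`, if `q` is odd and
`r ≤ q`, or `q` is even and `r ≤ q + 1`, then
`α_q(k,r) = r·q^(k-2) - C(r,2)·q^(k-3)`. -/
theorem statement_8 {F : Type} [Field F] [Fintype F] {q k r : ℕ}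
    (hq : Fintype.card F = q) (hk : 3 ≤ k) (hr : 3 ≤ r)
    (hcond : (Odd q ∧ r ≤ q) ∨ (Even q ∧ r ≤ q + 1)) :
    alphaQ F k r = r * q ^ (k - 2) - r.choose 2 * q ^ (k - 3) := by
  subst hq
  have hrq : r ≤ Fintype.card F + 1 := by
    rcases hcond with ⟨_, h⟩ | ⟨_, h⟩ <;> omega
  obtain ⟨S, hScard, H, U, hinj, hH, hU, hUH, hcover⟩ :=
    upper_bound (F := F) (r := r) hk hrq
  rw [alphaQ]
  apply le_antisymm
  · exact Nat.sInf_le ⟨S, hScard, H, U, hinj, hH, hU, hUH, hcover⟩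
  · refine le_csInf ⟨_, S, hScard, H, U, hinj, hH, hU, hUH, hcover⟩ ?_
    rintro m ⟨S', hS'card, H', U', hinj', hH', hU', hUH', hcover'⟩
    rw [← hS'card]
    exact lower_bound hk H' U' hinj' hH' hU' hUH' S' hcover'
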